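/- Fix integers m ≥ 2 and k with 1 ≤ k ≤ m. Then the total number of code words of length k over base dimension m equals k! (k factorial). -/

import Mathlib

/-- A code word of length `k` over base dimension `m`: a sequence
`A 1, A 2, …, A k` of finite sets of integers, each contained in `{2, 3, …}`,
such that `A 1 = ∅`, for each `2 ≤ j ≤ k` we have `A j ⊆ A (j-1) ∪ {j}`,
and `|A j| ≤ m - 1` for all `j`.  (We normalize `A i = ∅` outside `1 ≤ i ≤ k`.) -/
def IsCodeWord (m k : ℕ) (A : ℕ → Finset ℕ) : Prop :=
  A 1 = ∅ ∧
  (∀ i, 1 ≤ i → i ≤ k → ∀ x ∈ A i, 2 ≤ x) ∧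
  (∀ j, 2 ≤ j → j ≤ k → A j ⊆ A (j - 1) ∪ {j}) ∧
  (∀ i, 1 ≤ i → i ≤ k → (A i).card ≤ m - 1) ∧
  (∀ i, i = 0 ∨ k < i → A i = ∅)

/-- `multCW k A j` is `n_j`: the number of indices `i` (with `1 ≤ i ≤ k`)
such that `j ∈ A i`. -/
def multCW (k : ℕ) (A : ℕ → Finset ℕ) (j : ℕ) : ℕ :=
  ((Finset.Icc 1 k).filter (fun i => j ∈ A i)).card

open Finset

/-- Any element of `A i` is at most `i`. -/
lemma codeword_le {m k : ℕ} {A : ℕ → Finset ℕ} (hA : IsCodeWord m k A) :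
    ∀ i, i ≤ k → ∀ x ∈ A i, x ≤ i := by
  obtain ⟨h1, h2, h3, h4, h5⟩ := hA
  intro i
  induction i with
  | zero => intro _ x hx; rw [h5 0 (Or.inl rfl)] at hx; exact absurd hx (notMem_empty x)
  | succ n ih =>
    intro hik x hx
    by_cases h1' : n + 1 = 1
    · rw [h1', h1] at hx; exact absurd hx (notMem_empty x)
    · have h : 2 ≤ n + 1 := by omega
      have := h3 (n + 1) h hik hx
      simp only [Nat.add_sub_cancel, mem_union, mem_singleton] at this
      rcases this with h' | h'
      · exact le_trans (ih (le_trans (Nat.le_succ n) hik) x h') (Nat.le_succ n)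
      · omega

/-- Membership is downward-closed down to the entry index. -/
lemma codeword_mono_down {m k : ℕ} {A : ℕ → Finset ℕ} (hA : IsCodeWord m k A) :
    ∀ i, i ≤ k → ∀ j ∈ A i, ∀ i', j ≤ i' → i' ≤ i → j ∈ A i' := by
  obtain ⟨h1, h2, h3, h4, h5⟩ := hA
  intro i
  induction i with
  | zero => intro _ j hj; rw [h5 0 (Or.inl rfl)] at hj; exact absurd hj (notMem_empty j)
  | succ n ih =>
    intro hik j hj i' hji' hi'
    rcases Nat.eq_or_lt_of_le hi' with h | h
    · rwa [h]
    · have hn : i' ≤ n := by omega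
      have h2le : 2 ≤ n + 1 := by
        by_contra hc
        have : n + 1 = 1 := by omega
        rw [this, h1] at hj; exact absurd hj (notMem_empty j)
      have := h3 (n + 1) h2le hik hj
      simp only [Nat.add_sub_cancel, mem_union, mem_singleton] at this
      rcases this with h' | h'
      · exact ih (le_trans (Nat.le_succ n) hik) j h' i' hji' hn
      · omega

/-- The set of indices containing `j` is the interval `[j, multCW k A j + (j-1)]`. -/
lemma codeword_filter_eq_Icc {m k : ℕ} {A : ℕ → Finset ℕ} (hA : IsCodeWord m k A)
    {j : ℕ} (hj : 2 ≤ j) :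
    (Finset.Icc 1 k).filter (fun i => j ∈ A i) = Finset.Icc j (multCW k A j + (j - 1)) := by
  set s := (Finset.Icc 1 k).filter (fun i => j ∈ A i) with hs
  rcases s.eq_empty_or_nonempty with he | hne
  · have h0 : multCW k A j = 0 := by
      have : multCW k A j = s.card := by rw [multCW, hs]
      rw [this, he]; rfl
    rw [he, h0]
    symm
    rw [Finset.Icc_eq_empty_iff]
    omega
  · set M := s.max' hne with hM
    have hMs : M ∈ s := s.max'_mem hne
    rw [hs, mem_filter, mem_Icc] at hMs
    obtain ⟨⟨hM1, hMk⟩, hMA⟩ := hMs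
    have hjM : j ≤ M := codeword_le hA M hMk j hMA
    have hseq : s = Finset.Icc j M := by
      ext i
      rw [hs, mem_filter, mem_Icc, mem_Icc]
      constructor
      · rintro ⟨⟨hi1, hik⟩, hiA⟩
        exact ⟨codeword_le hA i hik j hiA, s.le_max' i (by rw [hs, mem_filter, mem_Icc]; exact ⟨⟨hi1, hik⟩, hiA⟩)⟩
      · rintro ⟨hji, hiM⟩
        refine ⟨⟨by omega, le_trans hiM hMk⟩, ?_⟩
        exact codeword_mono_down hA M hMk j hMA i hji hiM
    have hcard : multCW k A j = M + 1 - j := by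
      have : multCW k A j = s.card := by rw [multCW, hs]
      rw [this, hseq, Nat.card_Icc]
    rw [hseq, hcard]
    congr 1
    omega

lemma codeword_mem_iff {m k : ℕ} {A : ℕ → Finset ℕ} (hA : IsCodeWord m k A)
    {i : ℕ} (hi1 : 1 ≤ i) (hik : i ≤ k) (j : ℕ) :
    j ∈ A i ↔ 2 ≤ j ∧ j ≤ i ∧ i ≤ multCW k A j + (j - 1) := by
  constructor
  · intro h
    have hj2 : 2 ≤ j := hA.2.1 i hi1 hik j h
    have : i ∈ (Finset.Icc 1 k).filter (fun i => j ∈ A i) := by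
      rw [mem_filter, mem_Icc]; exact ⟨⟨hi1, hik⟩, h⟩
    rw [codeword_filter_eq_Icc hA hj2, mem_Icc] at this
    exact ⟨hj2, this.1, this.2⟩
  · rintro ⟨hj2, hji, hiD⟩
    have : i ∈ Finset.Icc j (multCW k A j + (j - 1)) := by rw [mem_Icc]; exact ⟨hji, hiD⟩
    rw [← codeword_filter_eq_Icc hA hj2, mem_filter] at this
    exact this.2

/-- The upper endpoint of the interval of `j` lies in `[j-1, k]`. -/
lemma codeword_D_mem {m k : ℕ} {A : ℕ → Finset ℕ} (hA : IsCodeWord m k A)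
    {j : ℕ} (hj2 : 2 ≤ j) (hjk : j ≤ k) :
    multCW k A j + (j - 1) ∈ Finset.Icc (j - 1) k := by
  rw [mem_Icc]
  refine ⟨by omega, ?_⟩
  have h := codeword_filter_eq_Icc hA hj2
  by_cases hne : ((Finset.Icc 1 k).filter (fun i => j ∈ A i)).Nonempty
  · obtain ⟨i, hi⟩ := hne
    have hi' := hi
    rw [h, mem_Icc] at hi'
    have hsub : Finset.Icc j (multCW k A j + (j - 1)) ⊆ Finset.Icc 1 k := by
      rw [← h]; exact filter_subset _ _
    have := hsub (by rw [mem_Icc]; exact ⟨by omega, le_refl _⟩)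
    rw [mem_Icc] at this
    exact this.2
  · rw [Finset.not_nonempty_iff_eq_empty] at hne
    have : multCW k A j = 0 := by rw [multCW, hne]; rfl
    omega

open Classical in
/-- Decode a choice of interval endpoints into a code word. -/
noncomputable def gCW (k : ℕ) (d : ∀ j ∈ Finset.Icc 2 k, ℕ) : ℕ → Finset ℕ :=
  fun i => (Finset.Icc 2 (min i k)).filter fun j =>
    ∀ hj : j ∈ Finset.Icc 2 k, i ≤ d j hj

lemma mem_gCW {k : ℕ} {d : ∀ j ∈ Finset.Icc 2 k, ℕ} {i j : ℕ} :
    j ∈ gCW k d i ↔ (2 ≤ j ∧ j ≤ min i k) ∧ ∀ hj : j ∈ Finset.Icc 2 k, i ≤ d j hj := by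
  classical
  rw [gCW, mem_filter, mem_Icc]

lemma gCW_isCodeWord {m k : ℕ} (hm : 2 ≤ m) (hkm : k ≤ m)
    {d : ∀ j ∈ Finset.Icc 2 k, ℕ}
    (hd : ∀ j (hj : j ∈ Finset.Icc 2 k), d j hj ∈ Finset.Icc (j - 1) k) :
    IsCodeWord m k (gCW k d) := by
  refine ⟨?_, ?_, ?_, ?_, ?_⟩
  · ext j; rw [mem_gCW]; simp only [notMem_empty, iff_false]
    rintro ⟨⟨h2, hle⟩, -⟩; omega
  · intro i _ _ x hx; rw [mem_gCW] at hx; exact hx.1.1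
  · intro j hj2 hjk x hx
    rw [mem_gCW] at hx
    obtain ⟨⟨hx2, hxle⟩, hxd⟩ := hx
    rw [mem_union, mem_singleton]
    by_cases hxj : x = j
    · exact Or.inr hxj
    · left
      rw [mem_gCW]
      have hxlt : x ≤ j - 1 := by omega
      refine ⟨⟨hx2, by omega⟩, fun h => le_trans (by omega) (hxd h)⟩
  · intro i hi1 hik
    have hsub : gCW k d i ⊆ Finset.Icc 2 i := by
      intro x hx; rw [mem_gCW] at hx; rw [mem_Icc]; exact ⟨hx.1.1, le_trans hx.1.2 (min_le_left _ _)⟩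
    calc (gCW k d i).card ≤ (Finset.Icc 2 i).card := Finset.card_le_card hsub
      _ = i - 1 := by rw [Nat.card_Icc]; omega
      _ ≤ m - 1 := by omega
  · intro i hi
    ext j
    rw [mem_gCW]
    simp only [notMem_empty, iff_false]
    rintro ⟨⟨h2, hle⟩, hcond⟩
    rcases hi with h0 | hki
    · omega
    · have hjk : j ∈ Finset.Icc 2 k := by rw [mem_Icc]; exact ⟨h2, by omega⟩
      have := hcond hjk
      have := hd j hjk
      rw [mem_Icc] at this
      omega

lemma prod_shift_eq_factorial (k : ℕ) :
    (∏ j ∈ Finset.Icc 2 k, (k + 1 - (j - 1))) = Nat.factorial k := by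
  have h1 : (∏ j ∈ Finset.Icc 2 k, (k + 1 - (j - 1))) = ∏ j ∈ Finset.Icc 2 k, j := by
    refine Finset.prod_nbij' (fun j => k + 2 - j) (fun j => k + 2 - j) ?_ ?_ ?_ ?_ ?_
    · intro a ha; rw [mem_Icc] at ha ⊢; omega
    · intro a ha; rw [mem_Icc] at ha ⊢; omega
    · intro a ha; rw [mem_Icc] at ha; omega
    · intro a ha; rw [mem_Icc] at ha; omega
    · intro a ha; rw [mem_Icc] at ha; omega
  rw [h1]
  rcases Nat.eq_zero_or_pos k with hk | hk
  · subst hk; simp [Nat.factorial]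
  · have h3 : (∏ j ∈ Finset.Icc 1 k, j) = Nat.factorial k := by
      rw [← Finset.Ico_add_one_right_eq_Icc]
      exact Finset.prod_Ico_id_eq_factorial k
    have h2 : Finset.Icc 1 k = insert 1 (Finset.Icc 2 k) := by
      ext x; rw [mem_insert, mem_Icc, mem_Icc]; omega
    rw [h2, Finset.prod_insert (by rw [mem_Icc]; omega), one_mul] at h3
    exact h3

/-- For `1 ≤ k ≤ m`, the total number of code words of length `k` over base
dimension `m` equals `k!`. -/
theorem count_codeWords_eq_factorial (m k : ℕ) (hm : 2 ≤ m) (hk1 : 1 ≤ k)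
    (hkm : k ≤ m) :
    {A : ℕ → Finset ℕ | IsCodeWord m k A}.ncard = Nat.factorial k := by
  classical
  have e : {A : ℕ → Finset ℕ | IsCodeWord m k A} ≃
      {d // d ∈ (Finset.Icc 2 k).pi (fun j => Finset.Icc (j - 1) k)} := by
    refine
      { toFun := fun A => ⟨fun j hj => multCW k A.1 j + (j - 1), ?_⟩
        invFun := fun d => ⟨gCW k d.1, ?_⟩
        left_inv := ?_
        right_inv := ?_ }
    · rw [Finset.mem_pi]
      intro j hj
      rw [mem_Icc] at hj
      exact codeword_D_mem A.2 hj.1 hj.2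
    · have hd := d.2
      rw [Finset.mem_pi] at hd
      exact gCW_isCodeWord hm hkm hd
    · rintro ⟨A, hA⟩
      apply Subtype.ext
      dsimp only
      funext i
      ext j
      rw [mem_gCW]
      simp only [Set.mem_setOf_eq] at hA
      by_cases hi : 1 ≤ i ∧ i ≤ k
      · rw [codeword_mem_iff hA hi.1 hi.2 j]
        constructor
        · rintro ⟨⟨h2, hle⟩, hcond⟩
          refine ⟨h2, le_trans hle (min_le_left _ _), ?_⟩
          exact hcond (by rw [mem_Icc]; exact ⟨h2, le_trans hle (min_le_right _ _)⟩)
        · rintro ⟨h2, hji, hiD⟩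
          exact ⟨⟨h2, le_min hji (le_trans hji hi.2)⟩, fun _ => hiD⟩
      · have hAe : A i = ∅ := hA.2.2.2.2 i (by omega)
        rw [hAe]
        simp only [notMem_empty, iff_false]
        rintro ⟨⟨h2, hle⟩, hcond⟩
        have hik : k < i := by omega
        have hjk : j ∈ Finset.Icc 2 k := by
          rw [mem_Icc]; exact ⟨h2, le_trans hle (min_le_right _ _)⟩
        have hc := hcond hjk
        have h2' := codeword_D_mem (j := j) hA h2 (le_trans hle (min_le_right _ _))
        rw [mem_Icc] at h2'
        omega
    · rintro ⟨d, hd⟩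
      rw [Finset.mem_pi] at hd
      apply Subtype.ext
      dsimp only
      funext j hj
      have hj' := hj
      rw [mem_Icc] at hj'
      have hdj := hd j hj
      rw [mem_Icc] at hdj
      have hfe : (Finset.Icc 1 k).filter (fun i => j ∈ gCW k d i) = Finset.Icc j (d j hj) := by
        ext i
        rw [mem_filter, mem_Icc, mem_Icc, mem_gCW]
        constructor
        · rintro ⟨⟨hi1, hik⟩, ⟨⟨h2, hle⟩, hcond⟩⟩
          exact ⟨le_trans hle (min_le_left _ _), hcond hj⟩
        · rintro ⟨hji, hid⟩
          have hik : i ≤ k := le_trans hid hdj.2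
          refine ⟨⟨by omega, hik⟩, ⟨⟨hj'.1, le_min hji (le_trans hji hik)⟩, ?_⟩⟩
          intro hj''
          exact hid
      have : multCW k (gCW k d) j = d j hj + 1 - j := by
        rw [multCW, hfe, Nat.card_Icc]
      rw [this]
      omega
  have h1 : {A : ℕ → Finset ℕ | IsCodeWord m k A}.ncard =
      Nat.card {A : ℕ → Finset ℕ | IsCodeWord m k A} := (Nat.card_coe_set_eq _).symm
  rw [h1, Nat.card_congr e, Nat.card_eq_finsetCard, Finset.card_pi]
  calc (∏ j ∈ Finset.Icc 2 k, (Finset.Icc (j - 1) k).card)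
      = ∏ j ∈ Finset.Icc 2 k, (k + 1 - (j - 1)) := by
        refine Finset.prod_congr rfl fun j hj => ?_
        rw [Nat.card_Icc]
    _ = Nat.factorial k := prod_shift_eq_factorial k
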